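/- Let 0 < α ≤ 4 and set c₁ = 1/2 + √(12/α − 3)/6 and c₂ = 1/2 − √(12/α − 3)/6. If c₁ is irrational, then for all integers n, n₁, n₂ with n = n₁ + n₂ and n ≠ 0 one has n³ − α n₁³ − α n₂³ ≠ 0; that is, the resonance equation has no nontrivial integer solutions. -/

import Mathlib

theorem stmt_4 (α : ℝ) (hα : 0 < α) (hα4 : α ≤ 4)
    (c₁ c₂ : ℝ)
    (hc₁ : c₁ = 1/2 + Real.sqrt (12/α - 3) / 6)
    (hc₂ : c₂ = 1/2 - Real.sqrt (12/α - 3) / 6)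
    (hirr : Irrational c₁) :
    ∀ n n₁ n₂ : ℤ, n = n₁ + n₂ → n ≠ 0 →
      (n : ℝ) ^ 3 - α * (n₁ : ℝ) ^ 3 - α * (n₂ : ℝ) ^ 3 ≠ 0 := by
  intro n n₁ n₂ hsum hn heq
  have hnR : (n : ℝ) ≠ 0 := Int.cast_ne_zero.mpr hn
  have hαne : α ≠ 0 := ne_of_gt hα
  have hnonneg : (0:ℝ) ≤ 12/α - 3 := by
    rw [sub_nonneg, le_div_iff₀ hα]; linarith
  have hs : Real.sqrt (12/α - 3) ^ 2 = 12/α - 3 := Real.sq_sqrt hnonneg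
  have hαs : α * Real.sqrt (12/α - 3) ^ 2 = 12 - 3 * α := by
    rw [hs]; field_simp
  have hn2 : (n₂ : ℝ) = (n : ℝ) - (n₁ : ℝ) := by
    have : (n : ℝ) = (n₁ : ℝ) + (n₂ : ℝ) := by exact_mod_cast congrArg (Int.cast : ℤ → ℝ) hsum
    linarith
  have hfac : (n : ℝ) * (-3 * α) * (((n₁ : ℝ) - c₁ * n) * ((n₁ : ℝ) - c₂ * n)) = 0 := by
    rw [← heq, hn2, hc₁, hc₂]
    linear_combination ((n:ℝ)^3 / 12) * hαs
  have hprod : ((n₁ : ℝ) - c₁ * n) * ((n₁ : ℝ) - c₂ * n) = 0 := by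
    have h3α : (n : ℝ) * (-3 * α) ≠ 0 := by
      apply mul_ne_zero hnR
      intro h
      apply hαne
      nlinarith
    exact (mul_eq_zero.mp hfac).resolve_left h3α
  rcases mul_eq_zero.mp hprod with h | h
  · exact hirr ⟨(n₁ : ℚ) / (n : ℚ), by
      push_cast
      rw [div_eq_iff hnR]
      linarith⟩
  · have hc : c₁ = 1 - c₂ := by rw [hc₁, hc₂]; ring
    exact hirr ⟨((n : ℚ) - (n₁ : ℚ)) / (n : ℚ), by
      push_cast
      rw [div_eq_iff hnR, hc]
      have hc2 : c₂ * n = (n₁ : ℝ) := by linarith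
      linarith⟩
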